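/- (Lemma 2, second part: exact coverage rate of the two-step confidence interval.) Fix an integer n ≥ 1, σ > 0, λ > 0, α, τ ∈ (0,1) and θ > 0, set ν_1 = z_{τ/2}σ/√n and ν_2 = √λ + z_{α/2}σ/√n (so ν_1 < ν_2), and let μ = N(θ, σ²/n). Then μ( {x : |x − θ| < z_{α/2}σ̃(θ)/√n and |x| ≥ ν_2} ∪ {x : |x − θ| < z_{α/2}σ/√n and ν_1 < |x| < ν_2} ) / μ({x : |x| > ν_1}) = (CR_b(θ, ν_1) + CR_a(θ, ν_2) − CR_b(θ, ν_2)) / P_s(θ, ν_1); that is, the conditional coverage probability CR(θ) of the two-step 100(1−α)% confidence interval, given that θ is selected by the two-step procedure, equals (CR_b(θ,ν_1) + CR_a(θ,ν_2) − CR_b(θ,ν_2))/P_s(θ,ν_1). -/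

import Mathlib

open MeasureTheory ProbabilityTheory

/-- The standard normal cumulative distribution function. -/
noncomputable def Phi (x : ℝ) : ℝ := (gaussianReal 0 1 (Set.Iic x)).toReal

/-- P_s(θ,ν) = Φ(√n(θ − ν)/σ) + Φ(√n(−θ − ν)/σ). -/
noncomputable def Ps (n : ℕ) (σ θ ν : ℝ) : ℝ :=
  Phi (Real.sqrt n * (θ - ν) / σ) + Phi (Real.sqrt n * (-θ - ν) / σ)

/-- σ̃(θ) = (1 + λ/θ²)⁻¹ σ for θ ≠ 0, with the convention σ̃(0) = 0. -/
noncomputable def sigTilde (lam σ θ : ℝ) : ℝ :=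
  if θ = 0 then 0 else (1 + lam / θ ^ 2)⁻¹ * σ

open Classical in
/-- The piecewise function CR_a(θ,ν); here `za` denotes the quantile z_{α/2}. -/
noncomputable def CRa (n : ℕ) (σ lam za θ ν : ℝ) : ℝ :=
  if θ < |ν - za * sigTilde lam σ θ / Real.sqrt n| then
    (Ps n σ θ ν - 2 * Phi (-(za * sigTilde lam σ θ / σ))) *
      (if ν < za * sigTilde lam σ θ / Real.sqrt n then 1 else 0)
  else if θ ≤ ν + za * sigTilde lam σ θ / Real.sqrt n then
    Phi (za * sigTilde lam σ θ / σ) - Phi (Real.sqrt n * (ν - θ) / σ)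
  else 1 - 2 * Phi (-(za * sigTilde lam σ θ / σ))

open Classical in
/-- The piecewise function CR_b(θ,ν); here `za` denotes the quantile z_{α/2}. -/
noncomputable def CRb (n : ℕ) (σ α za θ ν : ℝ) : ℝ :=
  if θ < |ν - za * σ / Real.sqrt n| then
    (Ps n σ θ ν - α) * (if ν < za * σ / Real.sqrt n then 1 else 0)
  else if θ ≤ ν + za * σ / Real.sqrt n then
    1 - α / 2 - Phi (Real.sqrt n * (ν - θ) / σ)
  else 1 - α


open Set
open scoped NNReal ENNReal
set_option linter.unusedSectionVars false

lemma sandwich (μ : Measure ℝ) (S T P : Set ℝ) (hST : S ⊆ T) (hTS : T ⊆ S ∪ P)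
    (hP : μ P = 0) : μ T = μ S :=
  le_antisymm ((measure_mono hTS).trans ((measure_union_le _ _).trans (by simp [hP])))
    (measure_mono hST)

section gauss
variable (m : ℝ) {v : ℝ≥0} (hv : v ≠ 0)
include hv

lemma g_singleton (a : ℝ) : gaussianReal m v {a} = 0 :=
  gaussianReal_absolutelyContinuous m hv (Real.volume_singleton)

lemma g_pair (a b : ℝ) : gaussianReal m v {a, b} = 0 := by
  rw [Set.insert_eq]
  exact measure_union_null (g_singleton m hv a) (g_singleton m hv b)

lemma g_Iio (a : ℝ) : gaussianReal m v (Iio a) = gaussianReal m v (Iic a) :=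
  (sandwich (gaussianReal m v) (Iio a) (Iic a) {a} Iio_subset_Iic_self
    (by intro x hx; rcases lt_or_eq_of_le (mem_Iic.mp hx) with h | h
        · exact Or.inl h
        · exact Or.inr (by simpa using h))
    (g_singleton m hv a)).symm

lemma g_Ioi_toReal (a : ℝ) :
    (gaussianReal m v (Ioi a)).toReal = 1 - (gaussianReal m v (Iic a)).toReal := by
  rw [← Set.compl_Iic, measure_compl measurableSet_Iic (measure_ne_top _ _),
    measure_univ, ENNReal.toReal_sub_of_le prob_le_one ENNReal.one_ne_top]
  simp

lemma g_Ioc_toReal (a b : ℝ) (hab : a ≤ b) :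
    (gaussianReal m v (Ioc a b)).toReal
      = (gaussianReal m v (Iic b)).toReal - (gaussianReal m v (Iic a)).toReal := by
  rw [show Ioc a b = Iic b \ Iic a by ext x; simp [and_comm, not_le],
    measure_diff (by intro x; simp; intro h; linarith) measurableSet_Iic.nullMeasurableSet
      (measure_ne_top _ _),
    ENNReal.toReal_sub_of_le (measure_mono (by intro x; simp; intro h; linarith))
      (measure_ne_top _ _)]

lemma g_Ioo_toReal (a b : ℝ) (hab : a ≤ b) :
    (gaussianReal m v (Ioo a b)).toReal
      = (gaussianReal m v (Iic b)).toReal - (gaussianReal m v (Iic a)).toReal := by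
  rw [← g_Ioc_toReal m hv a b hab]
  congr 1
  exact (sandwich _ _ _ {b} Ioo_subset_Ioc_self
    (by intro x hx; rcases lt_or_eq_of_le ((mem_Ioc.mp hx)).2 with h | h
        · exact Or.inl ⟨(mem_Ioc.mp hx).1, h⟩
        · exact Or.inr (by simpa using h))
    (g_singleton m hv b)).symm

end gauss

lemma sq_nnreal_ne_zero {s : ℝ} (hs : 0 < s) : (⟨s^2, sq_nonneg s⟩ : ℝ≥0) ≠ 0 := by
  intro h
  have : s^2 = 0 := congrArg NNReal.toReal h
  nlinarith

lemma g_Iic_toReal (θ : ℝ) {s : ℝ} (hs : 0 < s) (x : ℝ) :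
    ((gaussianReal θ (⟨s^2, sq_nonneg s⟩ : ℝ≥0)) (Iic x)).toReal = Phi ((x - θ)/s) := by
  have h1 : (gaussianReal 0 1).map (s * ·) = gaussianReal 0 ⟨s^2, sq_nonneg s⟩ := by
    have := gaussianReal_map_const_mul (μ := 0) (v := 1) s
    simp at this
    exact this
  have h2 : (gaussianReal 0 (⟨s^2, sq_nonneg s⟩ : ℝ≥0)).map (· + θ)
      = gaussianReal θ ⟨s^2, sq_nonneg s⟩ := by
    simpa using gaussianReal_map_add_const (μ := 0) (v := ⟨s^2, sq_nonneg s⟩) θ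
  rw [← h2, Measure.map_apply (measurable_add_const θ) measurableSet_Iic,
    show (· + θ) ⁻¹' Iic x = Iic (x - θ) by ext y; simp [le_sub_iff_add_le],
    ← h1, Measure.map_apply (measurable_const_mul s) measurableSet_Iic,
    show (s * ·) ⁻¹' Iic (x - θ) = Iic ((x - θ)/s) by
      ext y; simp [le_div_iff₀ hs, mul_comm]]
  rfl

lemma phi_neg (x : ℝ) : Phi (-x) = 1 - Phi x := by
  have hone : (1 : ℝ≥0) ≠ 0 := one_ne_zero
  have hmap : (gaussianReal 0 1).map (-1 * ·) = gaussianReal 0 1 := by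
    have := gaussianReal_map_const_mul (μ := 0) (v := 1) (-1)
    simp only [mul_zero] at this
    convert this using 3
    ext
    norm_num
  have : gaussianReal 0 1 (Iic (-x)) = gaussianReal 0 1 (Ici x) := by
    conv_lhs => rw [← hmap]
    rw [Measure.map_apply (measurable_const_mul (-1)) measurableSet_Iic]
    congr 1
    ext y
    simp only [mem_preimage, mem_Iic, mem_Ici]
    constructor <;> intro h <;> linarith
  rw [Phi, this, ← Set.compl_Iio, measure_compl measurableSet_Iio (measure_ne_top _ _),
    measure_univ, ENNReal.toReal_sub_of_le prob_le_one ENNReal.one_ne_top,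
    g_Iio 0 hone]
  simp [Phi]

lemma phi_zero : Phi 0 = 1/2 := by
  have := phi_neg 0
  rw [neg_zero] at this
  linarith

lemma phi_mono : Monotone Phi := by
  intro x y hxy
  exact ENNReal.toReal_mono (measure_ne_top _ _) (measure_mono (Iic_subset_Iic.mpr hxy))

lemma quantile_pos {z c : ℝ} (hc : c < 1/2) (hz : Phi (-z) = c) : 0 < z := by
  by_contra h
  push_neg at h
  have : Phi 0 ≤ Phi (-z) := phi_mono (by linarith)
  rw [phi_zero, hz] at this
  linarith

open Classical in
noncomputable def Gfun (s θ ν ρ : ℝ) : ℝ :=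
  if θ < |ν - ρ| then
    ((1 - Phi ((ν - θ)/s) + Phi ((-ν - θ)/s)) - 2 * Phi (-(ρ/s))) * (if ν < ρ then 1 else 0)
  else if θ ≤ ν + ρ then Phi (ρ/s) - Phi ((ν - θ)/s)
  else 1 - 2 * Phi (-(ρ/s))

lemma keylem {s θ ν ρ : ℝ} (hs : 0 < s) (hθ : 0 < θ) (hν : 0 ≤ ν) (hρ : 0 < ρ) :
    ((gaussianReal θ (⟨s^2, sq_nonneg s⟩ : ℝ≥0)) {x : ℝ | |x - θ| < ρ ∧ ν < |x|}).toReal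
      = Gfun s θ ν ρ := by
  have hv := sq_nnreal_ne_zero hs
  have hfin : IsFiniteMeasure (gaussianReal θ (⟨s^2, sq_nonneg s⟩ : ℝ≥0)) :=
    inferInstanceAs (IsFiniteMeasure (gaussianReal θ (NNReal.mk (s^2) (sq_nonneg s))))
  have hIic := g_Iic_toReal θ hs
  rw [Gfun]
  by_cases h1 : θ < |ν - ρ|
  · by_cases h2 : ν < ρ
    · -- case 1a
      have h1' : θ < ρ - ν := by
        rw [abs_of_neg (by linarith : ν - ρ < 0)] at h1; linarith
      have hset : {x : ℝ | |x - θ| < ρ ∧ ν < |x|}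
          = Ioo (θ - ρ) (-ν) ∪ Ioo ν (θ + ρ) := by
        ext x
        simp only [mem_setOf_eq, abs_lt, lt_abs, mem_union, mem_Ioo]
        constructor
        · rintro ⟨⟨ha, hb⟩, hc | hc⟩
          · right; exact ⟨hc, by linarith⟩
          · left; exact ⟨by linarith, by linarith⟩
        · rintro (⟨ha, hb⟩ | ⟨ha, hb⟩)
          · exact ⟨⟨by linarith, by linarith⟩, Or.inr (by linarith)⟩
          · exact ⟨⟨by linarith, by linarith⟩, Or.inl ha⟩
      have hdisj : Disjoint (Ioo (θ - ρ) (-ν)) (Ioo ν (θ + ρ)) := by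
        rw [Set.disjoint_left]
        intro x hx hx'
        have := hx.2; have := hx'.1; linarith
      rw [hset, measure_union hdisj measurableSet_Ioo,
        ENNReal.toReal_add (measure_ne_top _ _) (measure_ne_top _ _),
        g_Ioo_toReal θ hv _ _ (by linarith), g_Ioo_toReal θ hv _ _ (by linarith)]
      simp only [hIic]
      rw [if_pos h1, if_pos h2,
        show (θ - ρ - θ)/s = -(ρ/s) by ring, show (θ + ρ - θ)/s = ρ/s by ring]
      have := phi_neg (ρ/s)
      linarith
    · -- case 1b
      push_neg at h2
      have h1' : θ < ν - ρ := by
        rw [abs_of_nonneg (by linarith : (0:ℝ) ≤ ν - ρ)] at h1; linarith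
      have hset : {x : ℝ | |x - θ| < ρ ∧ ν < |x|} = (∅ : Set ℝ) := by
        rw [Set.eq_empty_iff_forall_notMem]
        intro x
        simp only [mem_setOf_eq, abs_lt, lt_abs, not_and, not_or]
        rintro ⟨ha, hb⟩
        constructor <;> intro <;> linarith
      rw [hset, if_pos h1, if_neg (by linarith : ¬ ν < ρ)]
      simp
  · push_neg at h1
    have hA : ρ - ν ≤ θ := le_trans (by rw [abs_sub_comm]; exact le_abs_self _) h1
    have hB : ν - ρ ≤ θ := le_trans (le_abs_self _) h1
    by_cases h2 : θ ≤ ν + ρ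
    · -- case 2
      have hset : {x : ℝ | |x - θ| < ρ ∧ ν < |x|} = Ioo ν (θ + ρ) := by
        ext x
        simp only [mem_setOf_eq, abs_lt, lt_abs, mem_Ioo]
        constructor
        · rintro ⟨⟨ha, hb⟩, hc | hc⟩
          · exact ⟨hc, by linarith⟩
          · constructor <;> linarith
        · rintro ⟨ha, hb⟩
          exact ⟨⟨by linarith, by linarith⟩, Or.inl ha⟩
      rw [hset, g_Ioo_toReal θ hv _ _ (by linarith), if_neg (not_lt.mpr h1), if_pos h2]
      simp only [hIic]
      rw [show (θ + ρ - θ)/s = ρ/s by ring]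
    · -- case 3
      push_neg at h2
      have hset : {x : ℝ | |x - θ| < ρ ∧ ν < |x|} = Ioo (θ - ρ) (θ + ρ) := by
        ext x
        simp only [mem_setOf_eq, abs_lt, lt_abs, mem_Ioo]
        constructor
        · rintro ⟨⟨ha, hb⟩, _⟩; exact ⟨by linarith, by linarith⟩
        · rintro ⟨ha, hb⟩; exact ⟨⟨by linarith, by linarith⟩, Or.inl (by linarith)⟩
      rw [hset, g_Ioo_toReal θ hv _ _ (by linarith), if_neg (not_lt.mpr h1),
        if_neg (not_le.mpr h2)]
      simp only [hIic]
      rw [show (θ - ρ - θ)/s = -(ρ/s) by ring, show (θ + ρ - θ)/s = ρ/s by ring]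
      have := phi_neg (ρ/s)
      linarith

lemma Ps_eq (n : ℕ) (hn : 1 ≤ n) {σ : ℝ} (hσ : 0 < σ) (θ ν : ℝ) :
    Ps n σ θ ν = 1 - Phi ((ν - θ)/(σ / Real.sqrt n)) + Phi ((-ν - θ)/(σ / Real.sqrt n)) := by
  have hn0 : (0:ℝ) < n := by exact_mod_cast Nat.lt_of_lt_of_le Nat.zero_lt_one hn
  have hsn : Real.sqrt n ≠ 0 := ne_of_gt (Real.sqrt_pos.mpr hn0)
  have hσ' : σ ≠ 0 := hσ.ne'
  rw [Ps, show Real.sqrt n * (θ - ν)/σ = -((ν - θ)/(σ / Real.sqrt n)) by field_simp; ring,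
    show Real.sqrt n * (-θ - ν)/σ = (-ν - θ)/(σ / Real.sqrt n) by field_simp; ring,
    phi_neg]

lemma CRb_eq (n : ℕ) (hn : 1 ≤ n) {σ α za : ℝ} (hσ : 0 < σ) (hza : Phi (-za) = α / 2)
    (θ ν : ℝ) :
    CRb n σ α za θ ν = Gfun (σ / Real.sqrt n) θ ν (za * σ / Real.sqrt n) := by
  have hn0 : (0:ℝ) < n := by exact_mod_cast Nat.lt_of_lt_of_le Nat.zero_lt_one hn
  have hsn : Real.sqrt n ≠ 0 := ne_of_gt (Real.sqrt_pos.mpr hn0)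
  have hσ' : σ ≠ 0 := hσ.ne'
  have hrs : (za * σ / Real.sqrt n) / (σ / Real.sqrt n) = za := by field_simp
  have hν : Real.sqrt n * (ν - θ) / σ = (ν - θ)/(σ / Real.sqrt n) := by field_simp
  have hz := phi_neg za
  rw [hza] at hz
  rw [CRb, Gfun, hrs, hν, Ps_eq n hn hσ θ ν]
  split_ifs
  · rw [hza]; ring
  · rw [hza]; ring
  · linarith
  · rw [hza]; ring

lemma CRa_eq (n : ℕ) (hn : 1 ≤ n) {σ : ℝ} (lam za : ℝ) (hσ : 0 < σ) (θ ν : ℝ) :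
    CRa n σ lam za θ ν = Gfun (σ / Real.sqrt n) θ ν (za * sigTilde lam σ θ / Real.sqrt n) := by
  have hn0 : (0:ℝ) < n := by exact_mod_cast Nat.lt_of_lt_of_le Nat.zero_lt_one hn
  have hsn : Real.sqrt n ≠ 0 := ne_of_gt (Real.sqrt_pos.mpr hn0)
  have hσ' : σ ≠ 0 := hσ.ne'
  have hrs : (za * sigTilde lam σ θ / Real.sqrt n) / (σ / Real.sqrt n)
      = za * sigTilde lam σ θ / σ := by field_simp
  have hν : Real.sqrt n * (ν - θ) / σ = (ν - θ)/(σ / Real.sqrt n) := by field_simp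
  rw [CRa, Gfun, hrs, hν, Ps_eq n hn hσ θ ν]

/-- Lemma 2, second part: the conditional coverage probability of the
two-step confidence interval, given selection by the two-step procedure
(|x| > ν₁ = z_{τ/2}σ/√n), equals
(CR_b(θ,ν₁) + CR_a(θ,ν₂) − CR_b(θ,ν₂))/P_s(θ,ν₁), where ν₂ = √λ + z_{α/2}σ/√n. -/
theorem CR_eq_conditional_coverage (n : ℕ) (hn : 1 ≤ n) (σ lam α τ za zt θ : ℝ)
    (hσ : 0 < σ) (hlam : 0 < lam)
    (hα : α ∈ Set.Ioo (0:ℝ) 1) (hτ : τ ∈ Set.Ioo (0:ℝ) 1)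
    (hza : Phi (-za) = α / 2) (hzt : Phi (-zt) = τ / 2) (hθ : 0 < θ)
    (hν12 : zt * σ / Real.sqrt n < Real.sqrt lam + za * σ / Real.sqrt n) :
    ((gaussianReal θ (Real.toNNReal (σ^2 / n)))
        ({x : ℝ | |x - θ| < za * sigTilde lam σ θ / Real.sqrt n ∧
            Real.sqrt lam + za * σ / Real.sqrt n ≤ |x|}
          ∪ {x : ℝ | |x - θ| < za * σ / Real.sqrt n ∧
              zt * σ / Real.sqrt n < |x| ∧
              |x| < Real.sqrt lam + za * σ / Real.sqrt n})).toReal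
      / ((gaussianReal θ (Real.toNNReal (σ^2 / n)))
          {x : ℝ | zt * σ / Real.sqrt n < |x|}).toReal
      = (CRb n σ α za θ (zt * σ / Real.sqrt n)
          + CRa n σ lam za θ (Real.sqrt lam + za * σ / Real.sqrt n)
          - CRb n σ α za θ (Real.sqrt lam + za * σ / Real.sqrt n))
        / Ps n σ θ (zt * σ / Real.sqrt n) := by
  have hn0 : (0:ℝ) < n := by exact_mod_cast Nat.lt_of_lt_of_le Nat.zero_lt_one hn
  have hsn : 0 < Real.sqrt n := Real.sqrt_pos.mpr hn0
  have hs : 0 < σ / Real.sqrt n := by positivity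
  have hVeq : Real.toNNReal (σ^2 / n)
      = (⟨(σ / Real.sqrt n)^2, sq_nonneg _⟩ : ℝ≥0) := by
    apply NNReal.coe_injective
    rw [Real.coe_toNNReal _ (by positivity)]
    show σ^2 / (n:ℝ) = (σ / Real.sqrt n)^2
    rw [div_pow, Real.sq_sqrt hn0.le]
  have hvne : (⟨(σ / Real.sqrt n)^2, sq_nonneg _⟩ : ℝ≥0) ≠ 0 := sq_nnreal_ne_zero hs
  have hza_pos : 0 < za := quantile_pos (by linarith [hα.2]) hza
  have hzt_pos : 0 < zt := quantile_pos (by linarith [hτ.2]) hzt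
  have hsig : 0 < sigTilde lam σ θ := by
    rw [sigTilde, if_neg hθ.ne']
    positivity
  rw [hVeq]
  set μ : MeasureTheory.Measure ℝ := gaussianReal θ ⟨(σ / Real.sqrt n)^2, sq_nonneg _⟩
    with hμdef
  have hμfin : IsFiniteMeasure μ :=
    inferInstanceAs (IsFiniteMeasure (gaussianReal θ (NNReal.mk ((σ / Real.sqrt n)^2) (sq_nonneg _))))
  set ν1 : ℝ := zt * σ / Real.sqrt n with hν1def
  set ν2 : ℝ := Real.sqrt lam + za * σ / Real.sqrt n with hν2def
  set r : ℝ := za * σ / Real.sqrt n with hrdef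
  set ρa : ℝ := za * sigTilde lam σ θ / Real.sqrt n with hρadef
  have hν1nn : 0 ≤ ν1 := by rw [hν1def]; positivity
  have hν2nn : 0 ≤ ν2 := by rw [hν2def]; positivity
  have hrpos : 0 < r := by rw [hrdef]; positivity
  have hρapos : 0 < ρa := by rw [hρadef]; positivity
  have hkey : ∀ ν ρ : ℝ, 0 ≤ ν → 0 < ρ →
      (μ {x : ℝ | |x - θ| < ρ ∧ ν < |x|}).toReal = Gfun (σ / Real.sqrt n) θ ν ρ :=
    fun ν ρ h h' => keylem hs hθ h h'
  have hmeas : ∀ ν ρ : ℝ, MeasurableSet {x : ℝ | |x - θ| < ρ ∧ ν ≤ |x|} := by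
    intro ν ρ
    have : {x : ℝ | |x - θ| < ρ ∧ ν ≤ |x|}
        = {x : ℝ | |x - θ| < ρ} ∩ {x : ℝ | ν ≤ |x|} := rfl
    rw [this]
    exact (measurableSet_lt ((measurable_id.sub_const θ).abs) measurable_const).inter
      (measurableSet_le measurable_const measurable_id.abs)
  have hmeasB : MeasurableSet {x : ℝ | |x - θ| < r ∧ ν1 < |x| ∧ |x| < ν2} := by
    have : {x : ℝ | |x - θ| < r ∧ ν1 < |x| ∧ |x| < ν2}
        = {x : ℝ | |x - θ| < r} ∩ ({x : ℝ | ν1 < |x|} ∩ {x : ℝ | |x| < ν2}) := rfl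
    rw [this]
    exact (measurableSet_lt ((measurable_id.sub_const θ).abs) measurable_const).inter
      ((measurableSet_lt measurable_const measurable_id.abs).inter
        (measurableSet_lt measurable_id.abs measurable_const))
  -- closed vs open boundary
  have hclose : ∀ ρ : ℝ, μ {x : ℝ | |x - θ| < ρ ∧ ν2 ≤ |x|}
      = μ {x : ℝ | |x - θ| < ρ ∧ ν2 < |x|} := by
    intro ρ
    apply sandwich μ _ _ {ν2, -ν2}
    · rintro x ⟨h1, h2⟩; exact ⟨h1, h2.le⟩
    · rintro x ⟨h1, h2⟩
      rcases lt_or_eq_of_le h2 with h | h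
      · exact Or.inl ⟨h1, h⟩
      · rcases (abs_eq hν2nn).mp h.symm with h' | h'
        · exact Or.inr (by simp [h'])
        · exact Or.inr (by simp [h'])
    · exact g_pair θ hvne ν2 (-ν2)
  -- numerator
  have hAval : (μ {x : ℝ | |x - θ| < ρa ∧ ν2 ≤ |x|}).toReal
      = Gfun (σ / Real.sqrt n) θ ν2 ρa := by
    rw [hclose ρa]; exact hkey ν2 ρa hν2nn hρapos
  have hsub : {x : ℝ | |x - θ| < r ∧ ν2 ≤ |x|} ⊆ {x : ℝ | |x - θ| < r ∧ ν1 < |x|} := by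
    rintro x ⟨h1, h2⟩; exact ⟨h1, lt_of_lt_of_le hν12 h2⟩
  have hBval : (μ {x : ℝ | |x - θ| < r ∧ ν1 < |x| ∧ |x| < ν2}).toReal
      = Gfun (σ / Real.sqrt n) θ ν1 r - Gfun (σ / Real.sqrt n) θ ν2 r := by
    have hBdiff : {x : ℝ | |x - θ| < r ∧ ν1 < |x| ∧ |x| < ν2}
        = {x : ℝ | |x - θ| < r ∧ ν1 < |x|} \ {x : ℝ | |x - θ| < r ∧ ν2 ≤ |x|} := by
      ext x
      simp only [Set.mem_diff, Set.mem_setOf_eq, not_and, not_le]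
      constructor
      · rintro ⟨h1, h2, h3⟩; exact ⟨⟨h1, h2⟩, fun _ => h3⟩
      · rintro ⟨⟨h1, h2⟩, h⟩; exact ⟨h1, h2, h h1⟩
    rw [hBdiff, measure_diff hsub (hmeas ν2 r).nullMeasurableSet (measure_ne_top _ _),
      ENNReal.toReal_sub_of_le (measure_mono hsub) (measure_ne_top _ _),
      hkey ν1 r hν1nn hrpos, hclose r, hkey ν2 r hν2nn hrpos]
  have hdisjAB : Disjoint {x : ℝ | |x - θ| < ρa ∧ ν2 ≤ |x|}
      {x : ℝ | |x - θ| < r ∧ ν1 < |x| ∧ |x| < ν2} := by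
    rw [Set.disjoint_left]
    rintro x ⟨_, h2⟩ ⟨_, _, h3⟩
    linarith
  have hnum : (μ ({x : ℝ | |x - θ| < ρa ∧ ν2 ≤ |x|}
      ∪ {x : ℝ | |x - θ| < r ∧ ν1 < |x| ∧ |x| < ν2})).toReal
      = Gfun (σ / Real.sqrt n) θ ν2 ρa
        + (Gfun (σ / Real.sqrt n) θ ν1 r - Gfun (σ / Real.sqrt n) θ ν2 r) := by
    rw [measure_union hdisjAB hmeasB,
      ENNReal.toReal_add (measure_ne_top _ _) (measure_ne_top _ _), hAval, hBval]
  -- denominator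
  have hden : (μ {x : ℝ | ν1 < |x|}).toReal = Ps n σ θ ν1 := by
    have hset : {x : ℝ | ν1 < |x|} = Set.Iio (-ν1) ∪ Set.Ioi ν1 := by
      ext x
      simp only [Set.mem_setOf_eq, lt_abs, Set.mem_union, Set.mem_Iio, Set.mem_Ioi]
      constructor
      · rintro (h | h)
        · right; exact h
        · left; linarith
      · rintro (h | h)
        · right; linarith
        · left; exact h
    have hdisj : Disjoint (Set.Iio (-ν1)) (Set.Ioi ν1) := by
      rw [Set.disjoint_left]
      intro x hx hx'
      simp only [Set.mem_Iio] at hx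
      simp only [Set.mem_Ioi] at hx'
      linarith
    rw [hset, measure_union hdisj measurableSet_Ioi,
      ENNReal.toReal_add (measure_ne_top _ _) (measure_ne_top _ _),
      g_Iio θ hvne, g_Ioi_toReal θ hvne, g_Iic_toReal θ hs, g_Iic_toReal θ hs,
      Ps_eq n hn hσ θ ν1]
    ring
  rw [hnum, hden, CRb_eq n hn hσ hza θ ν1, CRb_eq n hn hσ hza θ ν2,
    CRa_eq n hn lam za hσ θ ν2, ← hrdef, ← hρadef]
  ring
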